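/- Let k > 0 and N ≥ 0 be real numbers. There exists a constant C = C(N,k) such that: for every continuous y : [1,∞) → ℝ with M := sup_{σ≥1} σ^N·|y(σ)| < ∞, the function x(τ) := ∫_τ^∞ (2k)^{−1}·e^{−k(σ−τ)}·y(σ) dσ + ∫_1^τ (2k)^{−1}·e^{−k(τ−σ)}·y(σ) dσ is well defined (the improper integral converges absolutely) and satisfies sup_{τ≥1} τ^N·|x(τ)| ≤ C·M. -/

import Mathlib

open MeasureTheory

/-- Core inequality: `ε^N τ^N ≤ σ^N e^{(k/2)(τ-σ)}` for `1 ≤ σ ≤ τ`, where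
`ε = min 1 (k/(2(N+1)))`. -/
lemma parametrix_core (k N : ℝ) (hk : 0 < k) (hN : 0 ≤ N) {σ τ : ℝ}
    (hσ : 1 ≤ σ) (hστ : σ ≤ τ) :
    (min 1 (k / (2 * (N + 1)))) ^ N * τ ^ N ≤ σ ^ N * Real.exp (k / 2 * (τ - σ)) := by
  set ε : ℝ := min 1 (k / (2 * (N + 1))) with hεdef
  have hε0 : 0 < ε := lt_min one_pos (by positivity)
  have hε1 : ε ≤ 1 := min_le_left _ _
  have hNε : N * ε ≤ k / 2 := by
    have h1 : ε ≤ k / (2 * (N + 1)) := min_le_right _ _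
    have h2 : N * ε ≤ N * (k / (2 * (N + 1))) := by
      exact mul_le_mul_of_nonneg_left h1 hN
    have h3 : N * (k / (2 * (N + 1))) ≤ k / 2 := by
      rw [mul_div_assoc', div_le_div_iff₀ (by positivity) (by positivity)]
      nlinarith
    linarith
  set u : ℝ := τ - σ with hu
  have hu0 : 0 ≤ u := by simp [hu]; linarith
  have hσ0 : (0 : ℝ) < σ := by linarith
  have h1 : τ ≤ σ * (1 + u) := by nlinarith
  have h2 : τ ^ N ≤ σ ^ N * (1 + u) ^ N := by
    rw [← Real.mul_rpow hσ0.le (by linarith)]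
    exact Real.rpow_le_rpow (by linarith) h1 hN
  have h3 : ε * (1 + u) ≤ Real.exp (ε * u) := by
    have := Real.add_one_le_exp (ε * u)
    nlinarith
  have h4 : ε ^ N * (1 + u) ^ N ≤ Real.exp (k / 2 * u) := by
    rw [← Real.mul_rpow hε0.le (by linarith)]
    calc (ε * (1 + u)) ^ N ≤ Real.exp (ε * u) ^ N :=
          Real.rpow_le_rpow (by nlinarith) h3 hN
      _ = Real.exp (ε * u * N) := (Real.exp_mul _ _).symm
      _ ≤ Real.exp (k / 2 * u) := by
          apply Real.exp_le_exp.mpr; nlinarith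
  calc ε ^ N * τ ^ N ≤ ε ^ N * (σ ^ N * (1 + u) ^ N) := by
        apply mul_le_mul_of_nonneg_left h2 (Real.rpow_pos_of_pos hε0 N).le
    _ = σ ^ N * (ε ^ N * (1 + u) ^ N) := by ring
    _ ≤ σ ^ N * Real.exp (k / 2 * u) :=
        mul_le_mul_of_nonneg_left h4 (Real.rpow_pos_of_pos hσ0 N).le

/-- The discrete-mode parametrix built from the Green's function `(2k)⁻¹ e^{-k|τ-σ|}`
of `∂_τ² - k²` maps `σ^{-N}`-decaying data to `τ^{-N}`-decaying output. -/
theorem discrete_mode_parametrix_bound (k N : ℝ) (hk : 0 < k) (hN : 0 ≤ N) :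
    ∃ C : ℝ, 0 < C ∧ ∀ y : ℝ → ℝ, ContinuousOn y (Set.Ici 1) →
      ∀ M : ℝ, (∀ σ : ℝ, 1 ≤ σ → σ ^ N * |y σ| ≤ M) →
        (∀ τ : ℝ, 1 ≤ τ →
          IntegrableOn (fun σ => (2 * k)⁻¹ * Real.exp (-k * (σ - τ)) * y σ)
            (Set.Ici τ)) ∧
        (∀ τ : ℝ, 1 ≤ τ →
          τ ^ N *
              |(∫ σ in Set.Ici τ, (2 * k)⁻¹ * Real.exp (-k * (σ - τ)) * y σ)
                + ∫ σ in (1 : ℝ)..τ, (2 * k)⁻¹ * Real.exp (-k * (τ - σ)) * y σ|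
            ≤ C * M) := by
  have h2k : (0 : ℝ) < 2 * k := by linarith
  set ε : ℝ := min 1 (k / (2 * (N + 1))) with hεdef
  have hε0 : 0 < ε := lt_min one_pos (by positivity)
  have hεN : (0 : ℝ) < ε ^ (-N) := Real.rpow_pos_of_pos hε0 _
  refine ⟨(2 * k)⁻¹ * k⁻¹ + (2 * k)⁻¹ * ε ^ (-N) * (2 / k), by positivity, ?_⟩
  intro y hy M hM
  have hM0 : 0 ≤ M := le_trans (by positivity) (hM 1 le_rfl)
  -- pointwise bound on y
  have hybound : ∀ σ : ℝ, 1 ≤ σ → |y σ| ≤ M * σ ^ (-N) := by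
    intro σ hσ
    have hσN : (0 : ℝ) < σ ^ N := Real.rpow_pos_of_pos (by linarith) _
    rw [Real.rpow_neg (by linarith), ← div_eq_mul_inv, le_div_iff₀ hσN]
    have := hM σ hσ; linarith [hM σ hσ]
  -- integrability of the exponential kernel
  have hexpI : ∀ τ : ℝ, IntegrableOn (fun σ => Real.exp (-k * (σ - τ))) (Set.Ioi τ) := by
    intro τ
    have h := (exp_neg_integrableOn_Ioi τ hk).const_mul (Real.exp (k * τ))
    have heq : (fun σ => Real.exp (k * τ) * Real.exp (-k * σ))
        = fun σ => Real.exp (-k * (σ - τ)) := by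
      funext σ; rw [← Real.exp_add]; ring_nf
    rwa [heq] at h
  -- value of the exponential integral over Ioi τ
  have hexpval : ∀ τ : ℝ, ∫ σ in Set.Ioi τ, Real.exp (-k * (σ - τ)) = 1 / k := by
    intro τ
    have hderiv : ∀ x ∈ Set.Ici τ,
        HasDerivAt (fun σ => -(1 / k) * Real.exp (-k * (σ - τ)))
          (Real.exp (-k * (x - τ))) x := by
      intro x _
      have h1 : HasDerivAt (fun σ : ℝ => -k * (σ - τ)) (-k) x := by
        simpa using ((hasDerivAt_id x).sub_const τ).const_mul (-k)
      have h2 := (h1.exp).const_mul (-(1 / k))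
      convert h2 using 1
      · rfl
      · rfl
      · field_simp
    have htend : Filter.Tendsto (fun σ => -(1 / k) * Real.exp (-k * (σ - τ)))
        Filter.atTop (nhds 0) := by
      have h1 : Filter.Tendsto (fun σ : ℝ => k * (σ - τ)) Filter.atTop Filter.atTop := by
        apply Filter.Tendsto.const_mul_atTop hk
        exact Filter.tendsto_atTop_add_const_right _ (-τ) Filter.tendsto_id
      have h2 := Real.tendsto_exp_neg_atTop_nhds_zero.comp h1
      have h3 := h2.const_mul (-(1 / k))
      simpa [Function.comp, neg_mul, mul_zero] using h3
    have h := integral_Ioi_of_hasDerivAt_of_tendsto' hderiv (hexpI τ) htend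
    rw [h]; simp
  -- integrability (first part of the statement)
  have hInt : ∀ τ : ℝ, 1 ≤ τ →
      IntegrableOn (fun σ => (2 * k)⁻¹ * Real.exp (-k * (σ - τ)) * y σ) (Set.Ici τ) := by
    intro τ hτ
    have hmeas : AEStronglyMeasurable
        (fun σ => (2 * k)⁻¹ * Real.exp (-k * (σ - τ)) * y σ)
        (volume.restrict (Set.Ici τ)) := by
      apply ContinuousOn.aestronglyMeasurable _ measurableSet_Ici
      exact ((by fun_prop : Continuous fun σ : ℝ =>
        (2 * k)⁻¹ * Real.exp (-k * (σ - τ))).continuousOn).mul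
        (hy.mono (Set.Ici_subset_Ici.mpr hτ))
    have hbound : IntegrableOn
        (fun σ => (2 * k)⁻¹ * M * Real.exp (-k * (σ - τ))) (Set.Ici τ) := by
      rw [integrableOn_Ici_iff_integrableOn_Ioi]
      exact (hexpI τ).const_mul _
    apply Integrable.mono' hbound hmeas
    filter_upwards [ae_restrict_mem measurableSet_Ici] with σ hσ
    have hσ1 : (1 : ℝ) ≤ σ := le_trans hτ hσ
    have hyσ : |y σ| ≤ M := by
      have h1 := hybound σ hσ1
      have h2 : σ ^ (-N) ≤ 1 :=
        Real.rpow_le_one_of_one_le_of_nonpos hσ1 (by linarith)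
      nlinarith [abs_nonneg (y σ), Real.rpow_pos_of_pos (lt_of_lt_of_le one_pos hσ1) (-N)]
    have hE : (0 : ℝ) < Real.exp (-k * (σ - τ)) := Real.exp_pos _
    rw [Real.norm_eq_abs, abs_mul, abs_mul, abs_of_pos (by positivity : (0:ℝ) < (2*k)⁻¹),
      abs_of_pos hE]
    calc (2 * k)⁻¹ * Real.exp (-k * (σ - τ)) * |y σ|
        ≤ (2 * k)⁻¹ * Real.exp (-k * (σ - τ)) * M := by
          apply mul_le_mul_of_nonneg_left hyσ (by positivity)
      _ = (2 * k)⁻¹ * M * Real.exp (-k * (σ - τ)) := by ring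
  refine ⟨hInt, ?_⟩
  intro τ hτ
  have hτ0 : (0 : ℝ) < τ := lt_of_lt_of_le one_pos hτ
  have hτN : (0 : ℝ) < τ ^ N := Real.rpow_pos_of_pos hτ0 _
  have hτmN : (0 : ℝ) < τ ^ (-N) := Real.rpow_pos_of_pos hτ0 _
  -- bound on the first integral
  have hI1 : |∫ σ in Set.Ici τ, (2 * k)⁻¹ * Real.exp (-k * (σ - τ)) * y σ|
      ≤ (2 * k)⁻¹ * (M * τ ^ (-N)) * (1 / k) := by
    have hb : IntegrableOn
        (fun σ => (2 * k)⁻¹ * (M * τ ^ (-N)) * Real.exp (-k * (σ - τ))) (Set.Ici τ) := by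
      rw [integrableOn_Ici_iff_integrableOn_Ioi]
      exact (hexpI τ).const_mul _
    have hae : ∀ᵐ σ ∂(volume.restrict (Set.Ici τ)),
        ‖(2 * k)⁻¹ * Real.exp (-k * (σ - τ)) * y σ‖
          ≤ (2 * k)⁻¹ * (M * τ ^ (-N)) * Real.exp (-k * (σ - τ)) := by
      filter_upwards [ae_restrict_mem measurableSet_Ici] with σ hσ
      have hσ1 : (1 : ℝ) ≤ σ := le_trans hτ hσ
      have hσ0 : (0 : ℝ) < σ := by linarith
      have h1 : σ ^ (-N) ≤ τ ^ (-N) := by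
        rw [Real.rpow_neg hσ0.le, Real.rpow_neg hτ0.le]
        exact inv_anti₀ hτN (Real.rpow_le_rpow hτ0.le hσ hN)
      have hyσ : |y σ| ≤ M * τ ^ (-N) := by
        have := hybound σ hσ1
        nlinarith
      have hE : (0 : ℝ) < Real.exp (-k * (σ - τ)) := Real.exp_pos _
      rw [Real.norm_eq_abs, abs_mul, abs_mul,
        abs_of_pos (by positivity : (0:ℝ) < (2*k)⁻¹), abs_of_pos hE]
      calc (2 * k)⁻¹ * Real.exp (-k * (σ - τ)) * |y σ|
          ≤ (2 * k)⁻¹ * Real.exp (-k * (σ - τ)) * (M * τ ^ (-N)) := by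
            apply mul_le_mul_of_nonneg_left hyσ (by positivity)
        _ = (2 * k)⁻¹ * (M * τ ^ (-N)) * Real.exp (-k * (σ - τ)) := by ring
    have key := MeasureTheory.norm_integral_le_of_norm_le hb hae
    rw [Real.norm_eq_abs] at key
    calc |∫ σ in Set.Ici τ, (2 * k)⁻¹ * Real.exp (-k * (σ - τ)) * y σ|
        ≤ ∫ σ in Set.Ici τ, (2 * k)⁻¹ * (M * τ ^ (-N)) * Real.exp (-k * (σ - τ)) := key
      _ = (2 * k)⁻¹ * (M * τ ^ (-N)) * (1 / k) := by
          rw [integral_Ici_eq_integral_Ioi, MeasureTheory.integral_const_mul, hexpval τ]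
  -- value of the interval exponential integral
  have hFTC : ∫ σ in (1 : ℝ)..τ, Real.exp (k / 2 * (σ - τ))
      = 2 / k * Real.exp (k / 2 * (τ - τ)) - 2 / k * Real.exp (k / 2 * (1 - τ)) := by
    apply intervalIntegral.integral_eq_sub_of_hasDerivAt
      (f := fun σ => 2 / k * Real.exp (k / 2 * (σ - τ)))
    · intro x _
      have h1 : HasDerivAt (fun σ : ℝ => k / 2 * (σ - τ)) (k / 2) x := by
        simpa using ((hasDerivAt_id x).sub_const τ).const_mul (k / 2)
      have h2 := (h1.exp).const_mul (2 / k)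
      convert h2 using 1
      · rfl
      · field_simp
    · apply Continuous.intervalIntegrable; fun_prop
  have hexpint_nonneg : 0 ≤ ∫ σ in (1 : ℝ)..τ, Real.exp (k / 2 * (σ - τ)) := by
    rw [hFTC]
    have h1 : Real.exp (k / 2 * (1 - τ)) ≤ 1 := Real.exp_le_one_iff.mpr (by nlinarith)
    have h2 : Real.exp (k / 2 * (τ - τ)) = 1 := by simp
    rw [h2]
    have : (0:ℝ) < 2 / k := by positivity
    nlinarith
  have hexpint_le : (∫ σ in (1 : ℝ)..τ, Real.exp (k / 2 * (σ - τ))) ≤ 2 / k := by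
    rw [hFTC]
    have h1 : (0:ℝ) < Real.exp (k / 2 * (1 - τ)) := Real.exp_pos _
    have h2 : Real.exp (k / 2 * (τ - τ)) = 1 := by simp
    rw [h2]
    have : (0:ℝ) < 2 / k := by positivity
    nlinarith
  -- bound on the second integral
  have hI2 : |∫ σ in (1 : ℝ)..τ, (2 * k)⁻¹ * Real.exp (-k * (τ - σ)) * y σ|
      ≤ (2 * k)⁻¹ * (ε ^ (-N) * M * τ ^ (-N)) * (2 / k) := by
    have hg2 : IntervalIntegrable
        (fun σ => (2 * k)⁻¹ * (ε ^ (-N) * M * τ ^ (-N)) * Real.exp (k / 2 * (σ - τ)))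
        volume 1 τ := by
      apply Continuous.intervalIntegrable; fun_prop
    have hae : ∀ᵐ σ ∂(volume.restrict (Set.uIoc (1:ℝ) τ)),
        ‖(2 * k)⁻¹ * Real.exp (-k * (τ - σ)) * y σ‖
          ≤ (2 * k)⁻¹ * (ε ^ (-N) * M * τ ^ (-N)) * Real.exp (k / 2 * (σ - τ)) := by
      filter_upwards [ae_restrict_mem measurableSet_uIoc] with σ hσ
      rw [Set.uIoc_of_le hτ] at hσ
      obtain ⟨hσ1, hστ⟩ := hσ
      have hσ1' : (1 : ℝ) ≤ σ := hσ1.le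
      have hσ0 : (0 : ℝ) < σ := by linarith
      -- pointwise: (2k)⁻¹ e^{-k(τ-σ)} |y σ| ≤ (2k)⁻¹ ε^{-N} M τ^{-N} e^{(k/2)(σ-τ)}
      have hcore := parametrix_core k N hk hN hσ1' hστ
      have hkey : σ ^ (-N) * Real.exp (-(k / 2) * (τ - σ)) ≤ ε ^ (-N) * τ ^ (-N) := by
        have hσN : (0 : ℝ) < σ ^ N := Real.rpow_pos_of_pos hσ0 _
        have hεNp : (0 : ℝ) < ε ^ N := Real.rpow_pos_of_pos hε0 _
        rw [Real.rpow_neg hσ0.le, Real.rpow_neg hε0.le, Real.rpow_neg hτ0.le,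
          show -(k / 2) * (τ - σ) = -(k / 2 * (τ - σ)) by ring, Real.exp_neg,
          ← mul_inv, ← mul_inv]
        exact inv_anti₀ (by positivity) hcore
      have hE2 : Real.exp (-k * (τ - σ)) =
          Real.exp (-(k / 2) * (τ - σ)) * Real.exp (-(k / 2) * (τ - σ)) := by
        rw [← Real.exp_add]; ring_nf
      have hD0 : (0 : ℝ) < Real.exp (-(k / 2) * (τ - σ)) := Real.exp_pos _
      have hDle : Real.exp (-(k / 2) * (τ - σ)) = Real.exp (k / 2 * (σ - τ)) := by
        ring_nf
      have hyσ := hybound σ hσ1'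
      have hstep : Real.exp (-k * (τ - σ)) * |y σ|
          ≤ ε ^ (-N) * M * τ ^ (-N) * Real.exp (k / 2 * (σ - τ)) := by
        rw [hE2, hDle]
        have h1 : Real.exp (k / 2 * (σ - τ)) * |y σ|
            ≤ ε ^ (-N) * M * τ ^ (-N) := by
          calc Real.exp (k / 2 * (σ - τ)) * |y σ|
              ≤ Real.exp (k / 2 * (σ - τ)) * (M * σ ^ (-N)) := by
                apply mul_le_mul_of_nonneg_left hyσ (Real.exp_pos _).le
            _ = M * (σ ^ (-N) * Real.exp (-(k / 2) * (τ - σ))) := by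
                rw [hDle]; ring
            _ ≤ M * (ε ^ (-N) * τ ^ (-N)) := mul_le_mul_of_nonneg_left hkey hM0
            _ = ε ^ (-N) * M * τ ^ (-N) := by ring
        calc Real.exp (k / 2 * (σ - τ)) * Real.exp (k / 2 * (σ - τ)) * |y σ|
            = Real.exp (k / 2 * (σ - τ)) * (Real.exp (k / 2 * (σ - τ)) * |y σ|) := by ring
          _ ≤ Real.exp (k / 2 * (σ - τ)) * (ε ^ (-N) * M * τ ^ (-N)) :=
              mul_le_mul_of_nonneg_left h1 (Real.exp_pos _).le
          _ = ε ^ (-N) * M * τ ^ (-N) * Real.exp (k / 2 * (σ - τ)) := by ring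
      have hE : (0 : ℝ) < Real.exp (-k * (τ - σ)) := Real.exp_pos _
      rw [Real.norm_eq_abs, abs_mul, abs_mul,
        abs_of_pos (by positivity : (0:ℝ) < (2*k)⁻¹), abs_of_pos hE]
      calc (2 * k)⁻¹ * Real.exp (-k * (τ - σ)) * |y σ|
          = (2 * k)⁻¹ * (Real.exp (-k * (τ - σ)) * |y σ|) := by ring
        _ ≤ (2 * k)⁻¹ * (ε ^ (-N) * M * τ ^ (-N) * Real.exp (k / 2 * (σ - τ))) :=
            mul_le_mul_of_nonneg_left hstep (by positivity)
        _ = (2 * k)⁻¹ * (ε ^ (-N) * M * τ ^ (-N)) * Real.exp (k / 2 * (σ - τ)) := by ring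
    have key := intervalIntegral.norm_integral_le_abs_of_norm_le hae hg2
    rw [Real.norm_eq_abs] at key
    have hval : (∫ σ in (1 : ℝ)..τ,
        (2 * k)⁻¹ * (ε ^ (-N) * M * τ ^ (-N)) * Real.exp (k / 2 * (σ - τ)))
        = (2 * k)⁻¹ * (ε ^ (-N) * M * τ ^ (-N))
          * ∫ σ in (1 : ℝ)..τ, Real.exp (k / 2 * (σ - τ)) := by
      rw [intervalIntegral.integral_const_mul]
    have hc0 : (0 : ℝ) ≤ (2 * k)⁻¹ * (ε ^ (-N) * M * τ ^ (-N)) := by positivity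
    calc |∫ σ in (1 : ℝ)..τ, (2 * k)⁻¹ * Real.exp (-k * (τ - σ)) * y σ|
        ≤ |∫ σ in (1 : ℝ)..τ,
            (2 * k)⁻¹ * (ε ^ (-N) * M * τ ^ (-N)) * Real.exp (k / 2 * (σ - τ))| := key
      _ = (2 * k)⁻¹ * (ε ^ (-N) * M * τ ^ (-N))
            * ∫ σ in (1 : ℝ)..τ, Real.exp (k / 2 * (σ - τ)) := by
          rw [hval, abs_of_nonneg (mul_nonneg hc0 hexpint_nonneg)]
      _ ≤ (2 * k)⁻¹ * (ε ^ (-N) * M * τ ^ (-N)) * (2 / k) :=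
          mul_le_mul_of_nonneg_left hexpint_le hc0
  -- combine
  have hττ : τ ^ N * τ ^ (-N) = 1 := by
    rw [← Real.rpow_add hτ0]; simp
  have habs : |(∫ σ in Set.Ici τ, (2 * k)⁻¹ * Real.exp (-k * (σ - τ)) * y σ)
      + ∫ σ in (1 : ℝ)..τ, (2 * k)⁻¹ * Real.exp (-k * (τ - σ)) * y σ|
      ≤ ((2 * k)⁻¹ * k⁻¹ + (2 * k)⁻¹ * ε ^ (-N) * (2 / k)) * M * τ ^ (-N) := by
    have h1 := abs_add_le (∫ σ in Set.Ici τ, (2 * k)⁻¹ * Real.exp (-k * (σ - τ)) * y σ)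
      (∫ σ in (1 : ℝ)..τ, (2 * k)⁻¹ * Real.exp (-k * (τ - σ)) * y σ)
    have heq : (2 * k)⁻¹ * (M * τ ^ (-N)) * (1 / k)
        + (2 * k)⁻¹ * (ε ^ (-N) * M * τ ^ (-N)) * (2 / k)
        = ((2 * k)⁻¹ * k⁻¹ + (2 * k)⁻¹ * ε ^ (-N) * (2 / k)) * M * τ ^ (-N) := by
      field_simp
    linarith
  calc τ ^ N * |(∫ σ in Set.Ici τ, (2 * k)⁻¹ * Real.exp (-k * (σ - τ)) * y σ)
        + ∫ σ in (1 : ℝ)..τ, (2 * k)⁻¹ * Real.exp (-k * (τ - σ)) * y σ|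
      ≤ τ ^ N * (((2 * k)⁻¹ * k⁻¹ + (2 * k)⁻¹ * ε ^ (-N) * (2 / k)) * M * τ ^ (-N)) :=
        mul_le_mul_of_nonneg_left habs hτN.le
    _ = ((2 * k)⁻¹ * k⁻¹ + (2 * k)⁻¹ * ε ^ (-N) * (2 / k)) * M * (τ ^ N * τ ^ (-N)) := by
        ring
    _ = ((2 * k)⁻¹ * k⁻¹ + (2 * k)⁻¹ * ε ^ (-N) * (2 / k)) * M := by
        rw [hττ, mul_one]
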